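/- For 0 < s < 4, let w = exp(i·arccos(1 - s/2)). Then w = 1 - s/2 + i·(s/2)·sqrt(4/s - 1), and for any t with s ≥ t/2 > 0, f_{s-t}(w) = exp(i·(arccos(1-s/2) + ((s-t)/(2√s))·√(4-s))) ≠ 1. -/

import Mathlib

noncomputable def fBeta (β : ℝ) (z : ℂ) : ℂ :=
  z * Complex.exp (((β : ℂ) / 2) * ((1 + z) / (1 - z)))

set_option maxHeartbeats 1000000 in
theorem stmt_3 (s t : ℝ) (hs0 : 0 < s) (hs4 : s < 4) (ht : 0 < t / 2) (hst : t / 2 ≤ s)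
    (w : ℂ) (hw : w = Complex.exp (Complex.I * (Real.arccos (1 - s / 2) : ℂ))) :
    w = (1 - s / 2 : ℝ) + Complex.I * ((s / 2) * Real.sqrt (4 / s - 1) : ℝ) ∧
    fBeta (s - t) w =
      Complex.exp (Complex.I *
        ((Real.arccos (1 - s / 2) + ((s - t) / (2 * Real.sqrt s)) * Real.sqrt (4 - s) : ℝ) : ℂ)) ∧
    fBeta (s - t) w ≠ 1 := by
  set θ := Real.arccos (1 - s / 2) with hθdef
  set a := Real.sqrt s with hadef
  set b := Real.sqrt (4 - s) with hbdef
  have ha0 : 0 < a := Real.sqrt_pos.mpr hs0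
  have hb0 : 0 < b := Real.sqrt_pos.mpr (by linarith)
  have ha2 : a ^ 2 = s := Real.sq_sqrt hs0.le
  have hb2 : b ^ 2 = 4 - s := Real.sq_sqrt (by linarith)
  have hcos : Real.cos θ = 1 - s / 2 := Real.cos_arccos (by nlinarith) (by nlinarith)
  have hsin : Real.sin θ = a * b / 2 := by
    rw [hθdef, Real.sin_arccos,
      show (1 : ℝ) - (1 - s / 2) ^ 2 = (a * b / 2) ^ 2 by nlinarith [sq_nonneg (a*b)]]
    exact Real.sqrt_sq (by positivity)
  have hθ0 : 0 < θ := Real.arccos_pos.mpr (by linarith)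
  have hθπ : θ ≤ Real.pi := Real.arccos_le_pi _
  have hsinθ : a * b / 2 < θ := by
    have := Real.sin_lt hθ0
    linarith [hsin ▸ this]
  have hab2 : a * b ≤ 2 := by
    nlinarith [sq_nonneg (a * b - 2), sq_nonneg (s - 2), mul_pos ha0 hb0]
  -- Part 1
  have hw' : w = (Real.cos θ : ℂ) + (Real.sin θ : ℂ) * Complex.I := by
    rw [hw, mul_comm, Complex.exp_mul_I, Complex.ofReal_cos, Complex.ofReal_sin]
  have hσ : (s / 2) * Real.sqrt (4 / s - 1) = a * b / 2 := by
    have h1 : (0:ℝ) ≤ 4 / s - 1 := by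
      rw [sub_nonneg, le_div_iff₀ hs0]; linarith
    have hc2 : (Real.sqrt (4 / s - 1)) ^ 2 = 4 / s - 1 := Real.sq_sqrt h1
    have hc0 : 0 ≤ Real.sqrt (4 / s - 1) := Real.sqrt_nonneg _
    have hc2mul : s * (Real.sqrt (4 / s - 1)) ^ 2 = 4 - s := by
      rw [hc2]; field_simp
    have hsq : ((s / 2) * Real.sqrt (4 / s - 1)) ^ 2 = (a * b / 2) ^ 2 := by
      linear_combination (s / 4) * hc2mul - (b ^ 2 / 4) * ha2 - (s / 4) * hb2
    calc (s / 2) * Real.sqrt (4 / s - 1)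
        = Real.sqrt (((s / 2) * Real.sqrt (4 / s - 1)) ^ 2) :=
          (Real.sqrt_sq (by positivity)).symm
      _ = Real.sqrt ((a * b / 2) ^ 2) := by rw [hsq]
      _ = a * b / 2 := Real.sqrt_sq (by positivity)
  have part1 : w = ((1 - s / 2 : ℝ) : ℂ) + Complex.I * ((s / 2) * Real.sqrt (4 / s - 1) : ℝ) := by
    rw [hw', hcos, hsin, hσ]; ring
  -- Part 2
  have hwab : w = (1 - (s : ℂ) / 2) + ((a : ℂ) * b / 2) * Complex.I := by
    rw [hw', hcos, hsin]; push_cast; ring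
  have hA : (a : ℂ) ^ 2 = (s : ℂ) := by exact_mod_cast congrArg (Complex.ofReal) ha2
  have hB : (b : ℂ) ^ 2 = 4 - (s : ℂ) := by exact_mod_cast congrArg (Complex.ofReal) hb2
  have h1w : (1 : ℂ) - w ≠ 0 := by
    rw [hwab]
    intro h
    have him := congrArg Complex.im h
    simp at him
    rcases him with h' | h'
    · exact ha0.ne' h'
    · exact hb0.ne' h'
  have haC : (a : ℂ) ≠ 0 := by exact_mod_cast ha0.ne'
  have hkey : (a : ℂ) * (1 + w) = Complex.I * (b : ℂ) * (1 - w) := by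
    rw [hwab]
    linear_combination ((a:ℂ) * (b:ℂ) ^ 2 / 2) * Complex.I_sq
      + ((b:ℂ) * Complex.I / 2) * hA - ((a:ℂ) / 2) * hB
  have hfrac : (1 + w) / (1 - w) = Complex.I * ((b / a : ℝ) : ℂ) := by
    rw [div_eq_iff h1w]
    push_cast
    field_simp
    linear_combination hkey
  have part2 : fBeta (s - t) w =
      Complex.exp (Complex.I * ((θ + (s - t) / (2 * a) * b : ℝ) : ℂ)) := by
    unfold fBeta
    rw [hfrac, hw]
    rw [← Complex.exp_add]
    congr 1
    push_cast
    ring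
  refine ⟨part1, part2, ?_⟩
  -- Part 3
  set α := θ + (s - t) / (2 * a) * b with hαdef
  have hlow : -(a * b / 2) ≤ (s - t) / (2 * a) * b := by
    have h1 : (-s) / (2 * a) * b ≤ (s - t) / (2 * a) * b := by
      gcongr <;> linarith
    have h2 : (-s) / (2 * a) * b = -(a * b / 2) := by
      rw [← ha2]; field_simp
    linarith
  have hhigh : (s - t) / (2 * a) * b ≤ a * b / 2 := by
    have h1 : (s - t) / (2 * a) * b ≤ s / (2 * a) * b := by
      gcongr <;> linarith
    have h2 : s / (2 * a) * b = a * b / 2 := by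
      rw [← ha2]; field_simp
    linarith
  have hα0 : 0 < α := by
    simp only [hαdef]
    linarith
  have hα2π : α < 2 * Real.pi := by
    have hπ : (3:ℝ) < Real.pi := Real.pi_gt_three
    simp only [hαdef]
    linarith
  rw [part2]
  intro h
  obtain ⟨n, hn⟩ := Complex.exp_eq_one_iff.mp h
  have h2 : ((α : ℂ)) = ((n : ℝ) * (2 * Real.pi) : ℝ) := by
    push_cast
    linear_combination (-Complex.I) * hn + ((α:ℂ) - (n:ℂ) * 2 * (Real.pi:ℂ)) * Complex.I_sq
  have h3 : α = (n : ℝ) * (2 * Real.pi) := by exact_mod_cast h2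
  have hπ : 0 < Real.pi := Real.pi_pos
  have hn0 : (0:ℝ) < n := by nlinarith
  have hn1 : (n:ℝ) < 1 := by nlinarith
  have : (0:ℤ) < n := by exact_mod_cast hn0
  have : n < 1 := by exact_mod_cast hn1
  omega
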